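/- The following are equivalent: (1) for every integer n ≥ 1 there exists k with T^k(n) = 1; (2) for every integer n ≥ 0 there exists k with T_R^k(n) = 0. -/
import Mathlib


/-- The Collatz function. -/
def T (n : ℤ) : ℤ := if n % 2 = 0 then n / 2 else (3 * n + 1) / 2

/-- The refined map `T_R`. -/
def TR (n : ℤ) : ℤ :=
  if n % 4 = 0 then 3 * n / 4
  else if n % 4 = 2 then (n - 2) / 4
  else (3 * n + 1) / 2

lemma T_even {n : ℤ} (h : n % 2 = 0) : T n = n / 2 := by unfold T; rw [if_pos h]

lemma T_odd {n : ℤ} (h : n % 2 = 1) : T n = (3 * n + 1) / 2 := by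
  unfold T; rw [if_neg (by omega)]

lemma TR0 {n : ℤ} (h : n % 4 = 0) : TR n = 3 * n / 4 := by unfold TR; rw [if_pos h]

lemma TR2 {n : ℤ} (h : n % 4 = 2) : TR n = (n - 2) / 4 := by
  unfold TR; rw [if_neg (by omega), if_pos h]

lemma TRodd {n : ℤ} (h : n % 2 = 1) : TR n = (3 * n + 1) / 2 := by
  unfold TR; rw [if_neg (by omega), if_neg (by omega)]

/-- The key semiconjugacy: one `TR`-step on `v` corresponds to one or two
`T`-steps on `3v+2`. -/
lemma couple (v : ℤ) :
    T (3 * v + 2) = 3 * TR v + 2 ∨ T (T (3 * v + 2)) = 3 * TR v + 2 := by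
  have h4 : v % 4 = 0 ∨ v % 4 = 1 ∨ v % 4 = 2 ∨ v % 4 = 3 := by omega
  rcases h4 with h | h | h | h
  · right
    have e1 : T (3 * v + 2) = (3 * v + 2) / 2 := T_even (by omega)
    have e2 : T ((3 * v + 2) / 2) = (3 * ((3 * v + 2) / 2) + 1) / 2 := T_odd (by omega)
    rw [e1, e2, TR0 h]
    omega
  · left
    have e1 : T (3 * v + 2) = (3 * (3 * v + 2) + 1) / 2 := T_odd (by omega)
    rw [e1, TRodd (by omega)]
    omega
  · right
    have e1 : T (3 * v + 2) = (3 * v + 2) / 2 := T_even (by omega)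
    have e2 : T ((3 * v + 2) / 2) = ((3 * v + 2) / 2) / 2 := T_even (by omega)
    rw [e1, e2, TR2 h]
    omega
  · left
    have e1 : T (3 * v + 2) = (3 * (3 * v + 2) + 1) / 2 := T_odd (by omega)
    rw [e1, TRodd (by omega)]
    omega

lemma couple_iter (n : ℤ) :
    ∀ k : ℕ, ∃ m : ℕ, k ≤ m ∧ T^[m] (3 * n + 2) = 3 * TR^[k] n + 2 := by
  intro k
  induction k with
  | zero => exact ⟨0, le_refl _, rfl⟩
  | succ k ih =>
    obtain ⟨m, hm, heq⟩ := ih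
    rcases couple (TR^[k] n) with h | h
    · refine ⟨m + 1, by omega, ?_⟩
      calc T^[m + 1] (3 * n + 2) = T (T^[m] (3 * n + 2)) :=
            Function.iterate_succ_apply' T m _
        _ = T (3 * TR^[k] n + 2) := by rw [heq]
        _ = 3 * TR (TR^[k] n) + 2 := h
        _ = 3 * TR^[k + 1] n + 2 := by rw [Function.iterate_succ_apply']
    · refine ⟨m + 2, by omega, ?_⟩
      have h2 : T^[m + 2] (3 * n + 2) = T (T (T^[m] (3 * n + 2))) := by
        rw [show m + 2 = (m + 1) + 1 from rfl, Function.iterate_succ_apply',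
          Function.iterate_succ_apply']
      calc T^[m + 2] (3 * n + 2) = T (T (T^[m] (3 * n + 2))) := h2
        _ = T (T (3 * TR^[k] n + 2)) := by rw [heq]
        _ = 3 * TR (TR^[k] n) + 2 := h
        _ = 3 * TR^[k + 1] n + 2 := by rw [Function.iterate_succ_apply']

lemma T_one : T 1 = 2 := by decide
lemma T_two : T 2 = 1 := by decide

lemma T_one_two : ∀ j : ℕ, T^[j] 1 = 1 ∨ T^[j] 1 = 2 := by
  intro j
  induction j with
  | zero => left; rfl
  | succ j ih =>
    rcases ih with h | h
    · right
      rw [Function.iterate_succ_apply', h, T_one]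
    · left
      rw [Function.iterate_succ_apply', h, T_two]

theorem stmt_5 :
    (∀ n : ℤ, 1 ≤ n → ∃ k : ℕ, T^[k] n = 1) ↔
      (∀ n : ℤ, 0 ≤ n → ∃ k : ℕ, TR^[k] n = 0) := by
  constructor
  · -- Collatz ⇒ refined
    intro h1 n hn
    obtain ⟨K, hK⟩ := h1 (3 * n + 2) (by omega)
    obtain ⟨m, hm, heq⟩ := couple_iter n K
    refine ⟨K, ?_⟩
    have hsplit : T^[m] (3 * n + 2) = T^[m - K] (T^[K] (3 * n + 2)) := by
      rw [← Function.iterate_add_apply]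
      congr 1
      omega
    rw [hsplit, hK] at heq
    rcases T_one_two (m - K) with h | h <;> omega
  · -- refined ⇒ Collatz
    intro h2
    have claimA : ∀ v : ℤ, 0 ≤ v → ∃ m : ℕ, T^[m] (3 * v + 2) = 1 := by
      intro v hv
      obtain ⟨k, hk⟩ := h2 v hv
      obtain ⟨m, _, heq⟩ := couple_iter v k
      rw [hk] at heq
      refine ⟨m + 1, ?_⟩
      rw [Function.iterate_succ_apply', heq, show (3 : ℤ) * 0 + 2 = 2 by norm_num, T_two]
    have main : ∀ N : ℕ, ∀ n : ℤ, 1 ≤ n → n ≤ (N : ℤ) → ∃ k : ℕ, T^[k] n = 1 := by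
      intro N
      induction N with
      | zero => intro n hg hl; omega
      | succ N ih =>
        intro n hg hl
        rcases (by omega : n % 2 = 0 ∨ n % 2 = 1) with hmod | hmod
        · have hstep : T n = n / 2 := T_even hmod
          obtain ⟨k, hk⟩ := ih (n / 2) (by omega) (by omega)
          exact ⟨k + 1, by rw [Function.iterate_succ_apply, hstep, hk]⟩
        · have hstep : T n = (3 * n + 1) / 2 := T_odd hmod
          have hv : ∃ v : ℤ, 0 ≤ v ∧ T n = 3 * v + 2 :=
            ⟨((3 * n + 1) / 2 - 2) / 3, by omega, by omega⟩
          obtain ⟨v, hv0, hveq⟩ := hv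
          obtain ⟨m, hm⟩ := claimA v hv0
          exact ⟨m + 1, by rw [Function.iterate_succ_apply, hveq, hm]⟩
    intro n hg
    exact main n.toNat n hg (by omega)
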